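/- Let y = (y_1, ..., y_n) be a vector of n positive integer car lengths and let y⁺ = (y_1, ..., y_n, y_{n+1}) be any extension of y by one additional positive integer. If x ∈ PAinv_n(y), then (1, x) (the vector obtained by prepending an entry 1 to x) is in PAinv_{n+1}(y⁺). In particular, the map x ↦ (1, x) is an injection from PAinv↑_n(y) into PAinv↑_{n+1}(y⁺). -/

import Mathlib

/-- Car with preference `pref` and length `len` fits at spot `s`:
`pref ≤ s`, the spots `s, s+1, ..., s+len-1` all lie in the lot `[1, m]`,
and none of them is occupied. -/
def FitsAt (occ : Finset ℕ) (m pref len s : ℕ) : Prop :=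
  pref ≤ s ∧ s + len ≤ m + 1 ∧ ∀ t ∈ Finset.Ico s (s + len), t ∉ occ

/-- The car parks at `s`: `s` is the least spot (≥ its preference) where it fits. -/
def ParksAt (occ : Finset ℕ) (m pref len s : ℕ) : Prop :=
  FitsAt occ m pref len s ∧ ∀ s' < s, ¬ FitsAt occ m pref len s'

/-- Every car in the list of (preference, length) pairs can park, with
cars entering in order, starting from the set `occ` of occupied spots. -/
inductive Park (m : ℕ) : Finset ℕ → List (ℕ × ℕ) → Prop
  | nil (occ : Finset ℕ) : Park m occ []
  | cons (occ : Finset ℕ) (pref len : ℕ) (rest : List (ℕ × ℕ)) (s : ℕ) :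
      ParksAt occ m pref len s →
      Park m (occ ∪ Finset.Ico s (s + len)) rest →
      Park m occ ((pref, len) :: rest)

/-- `x` is a parking assortment for the length vector `y`. -/
def PA (y x : List ℕ) : Prop :=
  x.length = y.length ∧ (∀ v ∈ x, 1 ≤ v ∧ v ≤ y.sum) ∧ Park y.sum ∅ (x.zip y)

/-- `x` is a (permutation) invariant parking assortment for `y`. -/
def PAinv (y x : List ℕ) : Prop :=
  ∀ x' : List ℕ, x.Perm x' → PA y x'

/-- The degree of `x`: the number of entries of `x` different from 1. -/
def deg (x : List ℕ) : ℕ := (x.filter (fun v => v ≠ 1)).length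

/-- The characteristic of `y`: the greatest degree over all invariant
parking assortments for `y`. -/
noncomputable def chi (y : List ℕ) : ℕ := sSup {d | ∃ x, PAinv y x ∧ deg x = d}

/-- The invariant solution set of `y`. -/
def Wset (y : List ℕ) : Set ℕ :=
  {w | PAinv y (List.replicate (y.length - 1) 1 ++ [w])}

section AuxParking

lemma fitsAt_mono {occ : Finset ℕ} {m m' p l s : ℕ} (h : FitsAt occ m p l s) (hm : m ≤ m') :
    FitsAt occ m' p l s := ⟨h.1, by have := h.2.1; omega, h.2.2⟩

lemma fitsAt_weaken {occ : Finset ℕ} {m p p' l s : ℕ} (h : FitsAt occ m p l s) (hp : p' ≤ p) :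
    FitsAt occ m p' l s := ⟨le_trans hp h.1, h.2.1, h.2.2⟩

lemma parksAt_unique {occ : Finset ℕ} {m p l s s' : ℕ} (h : ParksAt occ m p l s)
    (h' : ParksAt occ m p l s') : s = s' := by
  rcases lt_trichotomy s s' with hlt | he | hlt
  · exact absurd h.1 (h'.2 s hlt)
  · exact he
  · exact absurd h'.1 (h.2 s' hlt)

lemma parksAt_mono {occ : Finset ℕ} {m m' p l s : ℕ} (h : ParksAt occ m p l s) (hm : m ≤ m') :
    ParksAt occ m' p l s := by
  refine ⟨fitsAt_mono h.1 hm, fun s' hs' hfit => h.2 s' hs' ?_⟩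
  exact ⟨hfit.1, by have := h.1.2.1; omega, hfit.2.2⟩

/-- Executing a list of cars from state `C` ends in state `C'`. -/
inductive RunTo (m : ℕ) : Finset ℕ → List (ℕ × ℕ) → Finset ℕ → Prop
  | nil (occ : Finset ℕ) : RunTo m occ [] occ
  | cons (occ : Finset ℕ) (pref len : ℕ) (rest : List (ℕ × ℕ)) (s : ℕ) (C' : Finset ℕ) :
      ParksAt occ m pref len s →
      RunTo m (occ ∪ Finset.Ico s (s + len)) rest C' →
      RunTo m occ ((pref, len) :: rest) C'

lemma park_runTo {m : ℕ} {C : Finset ℕ} {P : List (ℕ × ℕ)} (h : Park m C P) :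
    ∃ C', RunTo m C P C' := by
  induction h with
  | nil occ => exact ⟨occ, RunTo.nil occ⟩
  | cons occ pref len rest s hp _ ih =>
      obtain ⟨C', hC'⟩ := ih
      exact ⟨C', RunTo.cons _ _ _ _ _ _ hp hC'⟩

lemma runTo_park {m : ℕ} {C : Finset ℕ} {P : List (ℕ × ℕ)} {C' : Finset ℕ}
    (h : RunTo m C P C') : Park m C P := by
  induction h with
  | nil occ => exact Park.nil occ
  | cons occ pref len rest s C' hp _ ih => exact Park.cons _ _ _ _ _ hp ih

lemma runTo_unique {m : ℕ} {C : Finset ℕ} {P : List (ℕ × ℕ)} {C₁ : Finset ℕ}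
    (h : RunTo m C P C₁) : ∀ {C₂}, RunTo m C P C₂ → C₁ = C₂ := by
  induction h with
  | nil occ => intro C₂ h₂; cases h₂; rfl
  | cons occ pref len rest s C' hp _ ih =>
      intro C₂ h₂
      cases h₂ with
      | cons _ _ _ _ s₂ _ hp₂ hr₂ =>
          have : s = s₂ := parksAt_unique hp hp₂
          subst this
          exact ih hr₂

lemma runTo_append {m : ℕ} {C : Finset ℕ} {P₁ : List (ℕ × ℕ)} {C₁ : Finset ℕ}
    (h : RunTo m C P₁ C₁) : ∀ {P₂}, Park m C₁ P₂ → Park m C (P₁ ++ P₂) := by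
  induction h with
  | nil occ => intro P₂ h₂; simpa using h₂
  | cons occ pref len rest s C' hp _ ih =>
      intro P₂ h₂
      exact Park.cons _ _ _ _ _ hp (ih h₂)

lemma park_split {m : ℕ} : ∀ {P₁ : List (ℕ × ℕ)} {C : Finset ℕ} {P₂ : List (ℕ × ℕ)},
    Park m C (P₁ ++ P₂) → ∃ C₁, RunTo m C P₁ C₁ ∧ Park m C₁ P₂ := by
  intro P₁
  induction P₁ with
  | nil => intro C P₂ h; exact ⟨C, RunTo.nil C, by simpa using h⟩
  | cons a P₁ ih =>
      intro C P₂ h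
      obtain ⟨pref, len⟩ := a
      cases h with
      | cons _ _ _ _ s hp hrest =>
          obtain ⟨C₁, hr, hp₂⟩ := ih hrest
          exact ⟨C₁, RunTo.cons _ _ _ _ _ _ hp hr, hp₂⟩

lemma runTo_mono {m m' : ℕ} {C : Finset ℕ} {P : List (ℕ × ℕ)} {C' : Finset ℕ}
    (h : RunTo m C P C') (hm : m ≤ m') : RunTo m' C P C' := by
  induction h with
  | nil occ => exact RunTo.nil occ
  | cons occ pref len rest s C' hp _ ih => exact RunTo.cons _ _ _ _ _ _ (parksAt_mono hp hm) ih

lemma runTo_inv {m : ℕ} {C : Finset ℕ} {P : List (ℕ × ℕ)} {C' : Finset ℕ}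
    (h : RunTo m C P C') :
    C ⊆ Finset.Icc 1 m → (∀ pr ∈ P, 1 ≤ pr.1) →
      C' ⊆ Finset.Icc 1 m ∧ C'.card = C.card + (P.map Prod.snd).sum := by
  induction h with
  | nil occ => intro h1 _; exact ⟨h1, by simp⟩
  | cons occ pref len rest s C' hp _ ih =>
      intro h1 h2
      have hpref : 1 ≤ pref := h2 (pref, len) (List.mem_cons_self)
      have hs1 : 1 ≤ s := le_trans hpref hp.1.1
      have hsm : s + len ≤ m + 1 := hp.1.2.1
      have hsub : occ ∪ Finset.Ico s (s + len) ⊆ Finset.Icc 1 m := by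
        intro t ht
        rcases Finset.mem_union.1 ht with ht | ht
        · exact h1 ht
        · simp only [Finset.mem_Ico] at ht
          simp only [Finset.mem_Icc]
          omega
      have hdisj : Disjoint occ (Finset.Ico s (s + len)) := by
        rw [Finset.disjoint_right]
        intro t ht
        exact hp.1.2.2 t ht
      obtain ⟨ha, hb⟩ := ih hsub (fun pr hpr => h2 pr (by simp [hpr]))
      refine ⟨ha, ?_⟩
      rw [hb, Finset.card_union_of_disjoint hdisj, Nat.card_Ico]
      simp
      omega

lemma park_cover {m s : ℕ} {C : Finset ℕ} {P : List (ℕ × ℕ)} (h : Park m C P) :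
    C ⊆ Finset.Icc 1 m → C.card + (P.map Prod.snd).sum = m → 1 ≤ s → s ≤ m → s ∉ C →
    (∀ pr ∈ P, s < pr.1) → False := by
  induction h with
  | nil occ =>
      intro h1 h2 h3 h4 h5 _
      simp only [List.map_nil, List.sum_nil, Nat.add_zero] at h2
      have : occ = Finset.Icc 1 m := by
        apply Finset.eq_of_subset_of_card_le h1
        rw [h2, Nat.card_Icc]; omega
      exact h5 (this ▸ Finset.mem_Icc.2 ⟨h3, h4⟩)
  | cons occ pref len rest t hp _ ih =>
      intro h1 h2 h3 h4 h5 h6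
      have hps : s < pref := h6 (pref, len) (List.mem_cons_self)
      have hts : s < t := lt_of_lt_of_le hps hp.1.1
      have hsub : occ ∪ Finset.Ico t (t + len) ⊆ Finset.Icc 1 m := by
        intro u hu
        rcases Finset.mem_union.1 hu with hu | hu
        · exact h1 hu
        · simp only [Finset.mem_Ico] at hu
          have := hp.1.2.1
          simp only [Finset.mem_Icc]
          omega
      have hdisj : Disjoint occ (Finset.Ico t (t + len)) := by
        rw [Finset.disjoint_right]; exact fun u hu => hp.1.2.2 u hu
      apply ih hsub ?_ h3 h4 ?_ (fun pr hpr => h6 pr (by simp [hpr]))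
      · rw [Finset.card_union_of_disjoint hdisj, Nat.card_Ico]
        simp only [List.map_cons, List.sum_cons] at h2 ⊢
        omega
      · intro hmem
        rcases Finset.mem_union.1 hmem with hu | hu
        · exact h5 hu
        · simp only [Finset.mem_Ico] at hu; omega

lemma list_exists_min : ∀ (l : List ℕ), l ≠ [] → ∃ a ∈ l, ∀ b ∈ l, a ≤ b := by
  intro l
  induction l with
  | nil => intro h; exact absurd rfl h
  | cons a t ih =>
      intro _
      rcases eq_or_ne t [] with rfl | ht
      · exact ⟨a, by simp⟩
      · obtain ⟨b, hb, hbmin⟩ := ih ht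
        rcases le_total a b with hab | hab
        · refine ⟨a, by simp, ?_⟩
          intro v hv
          rcases List.mem_cons.1 hv with rfl | hv
          · exact le_refl _
          · exact le_trans hab (hbmin v hv)
        · refine ⟨b, by simp [hb], ?_⟩
          intro v hv
          rcases List.mem_cons.1 hv with rfl | hv
          · exact hab
          · exact hbmin v hv

end AuxParking
section KeyLemma

lemma key_lemma (m : ℕ) : ∀ (k : ℕ) (f : List ℕ), f.length < k →
    ∀ (C : Finset ℕ) (L Dl : List ℕ) (v u : ℕ),
    L.length = f.length + 1 →
    (∀ l ∈ L, 1 ≤ l) →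
    Dl.Perm (u :: f) →
    (∀ p ∈ Dl, v ≤ p) →
    1 ≤ v →
    C ⊆ Finset.Icc 1 m →
    C.card + L.sum = m →
    (∀ d : List ℕ, d.Perm Dl → Park m C (d.zip L)) →
    Park m C ((v :: f).zip L) := by
  intro k
  induction k with
  | zero => intro f hf; exact absurd hf (Nat.not_lt_zero _)
  | succ k ih =>
    intro f hf C L Dl v u hL1 hLpos hperm hvle hv1 hCsub hcard H
    classical
    -- destructure L
    obtain ⟨ℓ₀, L', rfl⟩ : ∃ ℓ₀ L', L = ℓ₀ :: L' := by
      cases L with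
      | nil => simp at hL1
      | cons a b => exact ⟨a, b, rfl⟩
    have hl0 : 1 ≤ ℓ₀ := hLpos _ (List.mem_cons_self)
    have hL'f : L'.length = f.length := by simpa using hL1
    -- Dl is nonempty
    have hDlne : Dl ≠ [] := by
      intro h; subst h; have := hperm.length_eq; simp at this
    obtain ⟨a, Dl', rfl⟩ := List.exists_cons_of_ne_nil hDlne
    have hDlL : ((a :: Dl')).length = (ℓ₀ :: L').length := by
      have := hperm.length_eq; simp at this ⊢; omega
    -- a fit for preference v exists
    have hparkDl := H (a :: Dl') (List.Perm.refl _)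
    rw [List.zip_cons_cons] at hparkDl
    have hexists : ∃ t, FitsAt C m v ℓ₀ t := by
      cases hparkDl with
      | cons _ _ _ _ s₁ hp₁ _ =>
          exact ⟨s₁, fitsAt_weaken hp₁.1 (hvle a (List.mem_cons_self))⟩
    set s := Nat.find hexists with hsdef
    have hfit : FitsAt C m v ℓ₀ s := Nat.find_spec hexists
    have hsmin : ∀ t < s, ¬ FitsAt C m v ℓ₀ t := fun t ht => Nat.find_min hexists ht
    have hparkv : ParksAt C m v ℓ₀ s := ⟨hfit, hsmin⟩
    have hvs : v ≤ s := hfit.1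
    have hsm : s + ℓ₀ ≤ m + 1 := hfit.2.1
    have hsnotC : s ∉ C := hfit.2.2 s (Finset.mem_Ico.2 ⟨le_refl s, by omega⟩)
    have hs1 : 1 ≤ s := le_trans hv1 hvs
    have hsle : s ≤ m := by omega
    by_cases hus : u ≤ s
    · -- Case A : sync immediately
      have hvu : v ≤ u := hvle u (hperm.mem_iff.2 (List.mem_cons_self))
      have hparku : ParksAt C m u ℓ₀ s :=
        ⟨⟨hus, hfit.2.1, hfit.2.2⟩, fun t ht hf' => hsmin t ht (fitsAt_weaken hf' hvu)⟩
      have hpk := H (u :: f) hperm.symm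
      rw [List.zip_cons_cons] at hpk
      cases hpk with
      | cons _ _ _ _ s₂ hp₂ hrest =>
          have hse : s₂ = s := parksAt_unique hp₂ hparku
          subst hse
          rw [List.zip_cons_cons]
          exact Park.cons _ _ _ _ s hparkv hrest
    · -- Case B
      have hsu : s < u := by omega
      -- some element of Dl is ≤ s
      have hminDl : ∃ p ∈ (a :: Dl'), p ≤ s := by
        by_contra hcon
        push_neg at hcon
        apply park_cover (H (a :: Dl') (List.Perm.refl _)) hCsub ?_ hs1 hsle hsnotC ?_
        · rw [List.map_snd_zip (le_of_eq hDlL.symm)]; exact hcard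
        · rintro ⟨p, l⟩ hpr
          exact hcon p (List.of_mem_zip hpr).1
      obtain ⟨p₀, hp₀mem, hp₀s⟩ := hminDl
      obtain ⟨u'', hu''mem, hu''min⟩ := list_exists_min (a :: Dl') (List.cons_ne_nil _ _)
      have hu''s : u'' ≤ s := le_trans (hu''min p₀ hp₀mem) hp₀s
      have hvu'' : v ≤ u'' := hvle u'' hu''mem
      have hparku'' : ParksAt C m u'' ℓ₀ s :=
        ⟨⟨hu''s, hfit.2.1, hfit.2.2⟩, fun t ht hf' => hsmin t ht (fitsAt_weaken hf' hvu'')⟩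
      have hu''uf : u'' ∈ u :: f := hperm.mem_iff.1 hu''mem
      have hu''ne : u'' ≠ u := by omega
      have hu''f : u'' ∈ f := by
        rcases List.mem_cons.1 hu''uf with h | h
        · exact absurd h hu''ne
        · exact h
      obtain ⟨f₁, f₂, rfl⟩ := List.append_of_mem hu''f
      -- split L'
      set L₁ := L'.take f₁.length with hL₁def
      set Ls := L'.drop f₁.length with hLsdef
      have hL'split : L' = L₁ ++ Ls := (List.take_append_drop _ _).symm
      have hflen : f₁.length + (f₂.length + 1) = L'.length := by
        rw [hL'f]; simp
      have hL₁len : L₁.length = f₁.length := by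
        rw [hL₁def, List.length_take]; omega
      have hLslen : Ls.length = f₂.length + 1 := by
        rw [hLsdef, List.length_drop]; omega
      -- the comparison permutation
      have hpermMid : ((u'' :: f₁) ++ u :: f₂).Perm (u :: (f₁ ++ u'' :: f₂)) := by
        have h1 : ((u'' :: f₁) ++ u :: f₂) = u'' :: (f₁ ++ u :: f₂) := by simp
        rw [h1]
        exact ((List.perm_middle).cons u'').trans
          ((List.Perm.swap u u'' _).trans ((List.perm_middle.symm).cons u))
      have hperm₂ : ((u'' :: f₁) ++ u :: f₂).Perm (a :: Dl') := hpermMid.trans hperm.symm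
      have hσ₀ := H _ hperm₂
      have hLsplit : (ℓ₀ :: L') = (ℓ₀ :: L₁) ++ Ls := by rw [hL'split]; rfl
      have hzipσ : ((u'' :: f₁) ++ u :: f₂).zip (ℓ₀ :: L') =
          ((u'' :: f₁).zip (ℓ₀ :: L₁)) ++ ((u :: f₂).zip Ls) := by
        rw [hLsplit]
        exact List.zip_append (by simp [hL₁len])
      rw [hzipσ] at hσ₀
      obtain ⟨C₂, hrun, hparkTail⟩ := park_split hσ₀
      rw [List.zip_cons_cons] at hrun
      -- the first car of the prefix parks at s
      have hrunPre : RunTo m C ((u'', ℓ₀) :: f₁.zip L₁) C₂ := hrun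
      cases hrun with
      | cons _ _ _ _ s₃ C₂' hp₃ hrun₁ =>
      have hs₃ : s₃ = s := parksAt_unique hp₃ hparku''
      subst hs₃
      -- state invariants
      have hC'sub : C ∪ Finset.Ico s (s + ℓ₀) ⊆ Finset.Icc 1 m := by
        intro t ht
        rcases Finset.mem_union.1 ht with ht | ht
        · exact hCsub ht
        · simp only [Finset.mem_Ico] at ht
          simp only [Finset.mem_Icc]; omega
      have hdisj : Disjoint C (Finset.Ico s (s + ℓ₀)) := by
        rw [Finset.disjoint_right]; exact fun t ht => hfit.2.2 t ht
      have hC'card : (C ∪ Finset.Ico s (s + ℓ₀)).card = C.card + ℓ₀ := by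
        rw [Finset.card_union_of_disjoint hdisj, Nat.card_Ico]; omega
      have hmemDl : ∀ p, p ∈ u :: (f₁ ++ u'' :: f₂) → 1 ≤ p := by
        intro p hp
        exact le_trans hv1 (hvle p (hperm.mem_iff.2 hp))
      have hinv := runTo_inv hrun₁ hC'sub (by
        rintro ⟨p, l⟩ hpr
        have : p ∈ f₁ := (List.of_mem_zip hpr).1
        exact hmemDl p (by simp [this]))
      obtain ⟨hC₂sub, hC₂card⟩ := hinv
      rw [List.map_snd_zip (le_of_eq hL₁len)] at hC₂card
      -- every arrangement of u :: f₂ parks from C₂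
      have H₂ : ∀ d : List ℕ, d.Perm (u :: f₂) → Park m C₂ (d.zip Ls) := by
        intro d hd
        have hdlen : d.length = f₂.length + 1 := by simpa using hd.length_eq
        have hpermd : ((u'' :: f₁) ++ d).Perm (a :: Dl') :=
          ((hd.append_left (u'' :: f₁)).trans hperm₂)
        have h := H _ hpermd
        have hzipd : ((u'' :: f₁) ++ d).zip (ℓ₀ :: L') =
            ((u'' :: f₁).zip (ℓ₀ :: L₁)) ++ (d.zip Ls) := by
          rw [hLsplit]
          exact List.zip_append (by simp [hL₁len])
        rw [hzipd] at h
        obtain ⟨C₃, hrun₃, hp₃'⟩ := park_split h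
        rw [List.zip_cons_cons] at hrun₃
        have : C₂ = C₃ := runTo_unique hrunPre hrun₃
        rw [← this] at hp₃'
        exact hp₃'
      -- apply induction hypothesis
      have hf₂len : f₂.length < k := by
        have : (f₁ ++ u'' :: f₂).length < k + 1 := hf
        simp at this; omega
      have hkey := ih f₂ hf₂len C₂ Ls (u :: f₂) u'' u hLslen
        (fun l hl => hLpos l (List.mem_cons_of_mem _ (List.mem_of_mem_drop (hLsdef ▸ hl))))
        (List.Perm.refl _)
        (by
          intro p hp
          rcases List.mem_cons.1 hp with rfl | hp
          · exact hu''min p (hperm.mem_iff.2 (List.mem_cons_self))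
          · exact hu''min p (hperm.mem_iff.2 (by simp [hp])))
        (le_trans hv1 hvu'') hC₂sub
        (by
          have hsum : (ℓ₀ :: L').sum = ℓ₀ + L₁.sum + Ls.sum := by
            rw [hL'split]; simp [List.sum_append]; omega
          omega)
        H₂
      -- assemble the run for the target list
      have hrunq : RunTo m C ((v :: f₁).zip (ℓ₀ :: L₁)) C₂ := by
        rw [List.zip_cons_cons]
        exact RunTo.cons _ _ _ _ _ _ hparkv hrun₁
      have hfin := runTo_append hrunq hkey
      have hzipq : (v :: (f₁ ++ u'' :: f₂)).zip (ℓ₀ :: L') =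
          ((v :: f₁).zip (ℓ₀ :: L₁)) ++ ((u'' :: f₂).zip Ls) := by
        rw [hLsplit]
        have : v :: (f₁ ++ u'' :: f₂) = (v :: f₁) ++ (u'' :: f₂) := by simp
        rw [this]
        exact List.zip_append (by simp [hL₁len])
      rw [hzipq]
      exact hfin

end KeyLemma
section MainAssembly

lemma claim1 (y x : List ℕ) (hx : PAinv y x) (hypos : ∀ v ∈ y, 0 < v)
    (z : List ℕ) (w : ℕ) (hzw : (z ++ [w]).Perm (1 :: x)) :
    Park y.sum ∅ (z.zip y) := by
  classical
  obtain ⟨hlen, hbd, hpark⟩ := hx x (List.Perm.refl x)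
  have hzlen : z.length = y.length := by
    have := hzw.length_eq; simp at this; omega
  by_cases hw1 : w = 1
  · subst hw1
    have hzx : z.Perm x := by
      have h2 : (z ++ [1]).Perm (x ++ [1]) :=
        hzw.trans (by simpa using (List.perm_middle (a := (1:ℕ)) (l₁ := x) (l₂ := ([] : List ℕ))).symm)
      exact (List.perm_append_right_iff [1]).1 h2
    exact (hx z hzx.symm).2.2
  · have h1z : (1:ℕ) ∈ z := by
      have h1 : (1:ℕ) ∈ z ++ [w] := hzw.mem_iff.2 (List.mem_cons_self)
      rcases List.mem_append.1 h1 with h | h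
      · exact h
      · simp at h; exact absurd h.symm hw1
    obtain ⟨z₁, z₂, rfl⟩ := List.append_of_mem h1z
    have hwx : w ∈ x := by
      have : w ∈ (1:ℕ) :: x := hzw.mem_iff.1 (by simp)
      rcases List.mem_cons.1 this with h | h
      · exact absurd h hw1
      · exact h
    -- the base permutation fact
    have hbase : (z₁ ++ (z₂ ++ [w])).Perm x := by
      have h1 : ((z₁ ++ 1 :: z₂) ++ [w]) = z₁ ++ 1 :: (z₂ ++ [w]) := by simp
      rw [h1] at hzw
      have h2 : ((1:ℕ) :: (z₁ ++ (z₂ ++ [w]))).Perm (1 :: x) :=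
        (List.perm_middle (a := (1:ℕ)) (l₁ := z₁) (l₂ := z₂ ++ [w])).symm.trans hzw
      exact h2.cons_inv
    have hpermgen : ∀ d : List ℕ, d.Perm (w :: z₂) → (z₁ ++ d).Perm x := by
      intro d hd
      have h3 : (w :: z₂).Perm (z₂ ++ [w]) := by
        simpa using (List.perm_middle (a := w) (l₁ := z₂) (l₂ := ([] : List ℕ))).symm
      exact ((hd.trans h3).append_left z₁).trans hbase
    -- split y
    set Y₁ := y.take z₁.length with hY₁def
    set Yt := y.drop z₁.length with hYtdef
    have hysplit : y = Y₁ ++ Yt := (List.take_append_drop _ _).symm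
    have hztot : z₁.length + (z₂.length + 1) = y.length := by
      rw [← hzlen]; simp
    have hY₁len : Y₁.length = z₁.length := by
      rw [hY₁def, List.length_take]; omega
    have hYtlen : Yt.length = z₂.length + 1 := by
      rw [hYtdef, List.length_drop]; omega
    have hzipsplit : ∀ d : List ℕ, d.length = z₂.length + 1 →
        (z₁ ++ d).zip y = (z₁.zip Y₁) ++ (d.zip Yt) := by
      intro d hd
      conv_lhs => rw [hysplit]
      exact List.zip_append hY₁len.symm
    have hσ : (z₁ ++ w :: z₂).Perm x := hpermgen _ (List.Perm.refl _)
    have hp1 := (hx _ hσ.symm).2.2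
    rw [hzipsplit _ (by simp)] at hp1
    obtain ⟨C₁, hrun₁, hpw⟩ := park_split hp1
    have H : ∀ d : List ℕ, d.Perm (w :: z₂) → Park y.sum C₁ (d.zip Yt) := by
      intro d hd
      have h := (hx _ (hpermgen d hd).symm).2.2
      rw [hzipsplit d (by simpa using hd.length_eq)] at h
      obtain ⟨C₃, hrun₃, hp₃⟩ := park_split h
      rw [← runTo_unique hrun₁ hrun₃] at hp₃
      exact hp₃
    -- entries of x are ≥ 1
    have hxpos : ∀ p ∈ x, 1 ≤ p := fun p hp => (hbd p hp).1
    have hz₁pos : ∀ p ∈ z₁, 1 ≤ p := fun p hp => hxpos p (hσ.mem_iff.1 (by simp [hp]))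
    have hz₂pos : ∀ p ∈ z₂, 1 ≤ p := fun p hp => hxpos p (hσ.mem_iff.1 (by simp [hp]))
    have hinv := runTo_inv hrun₁ (by simp) (by
      rintro ⟨p, l⟩ hpr
      exact hz₁pos p (List.of_mem_zip hpr).1)
    obtain ⟨hC₁sub, hC₁card⟩ := hinv
    rw [List.map_snd_zip (le_of_eq hY₁len)] at hC₁card
    simp only [Finset.card_empty, Nat.zero_add] at hC₁card
    have hkey := key_lemma y.sum (z₂.length + 1) z₂ (by omega) C₁ Yt (w :: z₂) 1 w
      hYtlen
      (fun l hl => hypos l (List.mem_of_mem_drop (hYtdef ▸ hl)))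
      (List.Perm.refl _)
      (by
        intro p hp
        rcases List.mem_cons.1 hp with rfl | hp
        · exact hxpos p hwx
        · exact hz₂pos p hp)
      (le_refl 1) hC₁sub
      (by
        have : y.sum = Y₁.sum + Yt.sum := by rw [hysplit]; simp
        omega)
      H
    have hfin := runTo_append hrun₁ hkey
    rw [hzipsplit _ (by simp)]
    exact hfin

end MainAssembly
lemma part1 (y : List ℕ) (hylenpos : 0 < y.length) (hypos : ∀ v ∈ y, 0 < v) (c : ℕ) (hc : 0 < c)
    (x : List ℕ) (hx : PAinv y x) : PAinv (y ++ [c]) (1 :: x) := by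
  classical
  intro x' hperm'
  obtain ⟨hlen, hbd, _⟩ := hx x (List.Perm.refl x)
  have hm1 : 1 ≤ y.sum := by
    obtain ⟨a, t, rfl⟩ := List.exists_cons_of_ne_nil (List.length_pos_iff.1 hylenpos)
    have := hypos a (List.mem_cons_self)
    simp [List.sum_cons]; omega
  have hsumc : (y ++ [c]).sum = y.sum + c := by simp
  refine ⟨?_, ?_, ?_⟩
  · have := hperm'.length_eq; simp at this ⊢; omega
  · intro v hv
    have hv1 : v ∈ (1:ℕ) :: x := hperm'.mem_iff.2 hv
    rw [hsumc]
    rcases List.mem_cons.1 hv1 with rfl | hvx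
    · omega
    · have := hbd v hvx; omega
  · rw [hsumc]
    have hx'ne : x' ≠ [] := by
      intro h; subst h; have := hperm'.length_eq; simp at this
    obtain ⟨z, w, hx'eq⟩ : ∃ z w, z ++ [w] = x' :=
      ⟨x'.dropLast, x'.getLast hx'ne, List.dropLast_append_getLast hx'ne⟩
    have hzw : (z ++ [w]).Perm (1 :: x) := by rw [hx'eq]; exact hperm'.symm
    have hclaim := claim1 y x hx hypos z w hzw
    have hzlen : z.length = y.length := by
      have := hzw.length_eq; simp at this; omega
    have hzpos : ∀ p ∈ z, 1 ≤ p := by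
      intro p hp
      have : p ∈ (1:ℕ) :: x := hzw.mem_iff.1 (by simp [hp])
      rcases List.mem_cons.1 this with rfl | h
      · exact le_refl 1
      · exact (hbd p h).1
    obtain ⟨Cf, hrunf⟩ := park_runTo hclaim
    have hinvf := runTo_inv hrunf (by simp) (by
      rintro ⟨p, l⟩ hpr
      exact hzpos p (List.of_mem_zip hpr).1)
    have hCf : Cf = Finset.Icc 1 y.sum := by
      apply Finset.eq_of_subset_of_card_le hinvf.1
      rw [hinvf.2, List.map_snd_zip (le_of_eq hzlen.symm), Nat.card_Icc]
      simp
    rw [hCf] at hrunf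
    have hrunf' : RunTo (y.sum + c) ∅ (z.zip y) (Finset.Icc 1 y.sum) :=
      runTo_mono hrunf (by omega)
    have hwmem : w ∈ (1:ℕ) :: x := hzw.mem_iff.1 (by simp)
    have hwle : w ≤ y.sum := by
      rcases List.mem_cons.1 hwmem with rfl | h
      · exact hm1
      · exact (hbd w h).2
    have hw1 : 1 ≤ w := by
      rcases List.mem_cons.1 hwmem with rfl | h
      · exact le_refl 1
      · exact (hbd w h).1
    have hplast : ParksAt (Finset.Icc 1 y.sum) (y.sum + c) w c (y.sum + 1) := by
      constructor
      · refine ⟨by omega, by omega, ?_⟩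
        intro t ht
        simp only [Finset.mem_Ico] at ht
        simp only [Finset.mem_Icc]
        omega
      · intro s' hs' hf'
        have h1 : w ≤ s' := hf'.1
        have hmem : s' ∈ Finset.Icc 1 y.sum := Finset.mem_Icc.2 ⟨by omega, by omega⟩
        exact hf'.2.2 s' (Finset.mem_Ico.2 ⟨le_refl _, by omega⟩) hmem
    have hlast : Park (y.sum + c) (Finset.Icc 1 y.sum) [(w, c)] :=
      Park.cons _ _ _ _ _ hplast (Park.nil _)
    have hfin := runTo_append hrunf' hlast
    rw [← hx'eq, List.zip_append hzlen]
    simpa using hfin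

/-- if `x ∈ PAinv_n(y)` then `(1, x) ∈ PAinv_{n+1}(y⁺)` where
`y⁺ = (y, c)`; in particular `x ↦ (1, x)` maps `PAinv↑_n(y)` into
`PAinv↑_{n+1}(y⁺)` injectively. -/
theorem stmt12 (n : ℕ) (hn : 0 < n) (y : List ℕ) (hylen : y.length = n)
    (hypos : ∀ v ∈ y, 0 < v) (c : ℕ) (hc : 0 < c) :
    (∀ x : List ℕ, PAinv y x → PAinv (y ++ [c]) (1 :: x)) ∧
      Set.MapsTo (fun x : List ℕ => 1 :: x)
        {x | PAinv y x ∧ x.Pairwise (· ≤ ·)}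
        {x | PAinv (y ++ [c]) x ∧ x.Pairwise (· ≤ ·)} ∧
      Set.InjOn (fun x : List ℕ => 1 :: x)
        {x | PAinv y x ∧ x.Pairwise (· ≤ ·)} := by
  have hylenpos : 0 < y.length := by omega
  refine ⟨fun x hx => part1 y hylenpos hypos c hc x hx, ?_, ?_⟩
  · intro x hxmem
    obtain ⟨hx, hsort⟩ := hxmem
    refine ⟨part1 y hylenpos hypos c hc x hx, ?_⟩
    rw [List.pairwise_cons]
    refine ⟨fun b hb => ((hx x (List.Perm.refl x)).2.1 b hb).1, hsort⟩
  · intro a _ b _ h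
    simpa using h
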